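/- Let f be a symmetric, concave, differentiable function on the open positive cone Γⁿ ⊆ ℝⁿ. If λ ∈ Γⁿ and μᵢ = ∂_i f(λ), then for all indices i ≠ j: λᵢ ≥ λ_j implies μᵢ ≤ μ_j. That is, the gradient entries are anti-monotone relative to the ordering of the coordinates. -/

import Mathlib

open Set

/-- The positive cone is open. -/
lemma isOpen_posCone (n : ℕ) : IsOpen {x : Fin n → ℝ | ∀ i, 0 < x i} := by
  have : {x : Fin n → ℝ | ∀ i, 0 < x i} = Set.pi Set.univ (fun _ => Set.Ioi (0:ℝ)) := by
    ext x; simp [Set.mem_pi]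
  rw [this]
  exact isOpen_set_pi Set.finite_univ (fun i _ => isOpen_Ioi)

/-- Chain rule for a symmetric function: the derivative at `x` applied to `v` equals the
derivative at `x ∘ σ` applied to `v ∘ σ`. -/
lemma fderiv_perm (n : ℕ) (f : (Fin n → ℝ) → ℝ)
    (hsym : ∀ σ : Equiv.Perm (Fin n), ∀ x : Fin n → ℝ, (∀ i, 0 < x i) →
      f (x ∘ σ) = f x)
    (hdiff : ∀ x : Fin n → ℝ, (∀ i, 0 < x i) → DifferentiableAt ℝ f x)
    (σ : Equiv.Perm (Fin n)) (x : Fin n → ℝ) (hx : ∀ i, 0 < x i) (v : Fin n → ℝ) :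
    fderiv ℝ f x v = fderiv ℝ f (x ∘ σ) (v ∘ σ) := by
  set P : (Fin n → ℝ) →L[ℝ] (Fin n → ℝ) :=
    (LinearMap.funLeft ℝ ℝ σ).toContinuousLinearMap with hP
  have hPapp : ∀ y : Fin n → ℝ, P y = y ∘ σ := fun y => rfl
  have hxσ : ∀ i, 0 < (x ∘ σ) i := fun i => hx (σ i)
  have heq : (f ∘ P) =ᶠ[nhds x] f := by
    filter_upwards [(isOpen_posCone n).mem_nhds hx] with y hy
    simpa [hPapp] using hsym σ y hy
  have h1 : fderiv ℝ f x = fderiv ℝ (f ∘ P) x := (heq.fderiv_eq).symm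
  have h2 : fderiv ℝ (f ∘ P) x = (fderiv ℝ f (P x)).comp (fderiv ℝ (⇑P) x) :=
    fderiv_comp x (by simpa [hPapp] using hdiff (x ∘ σ) hxσ) P.differentiableAt
  rw [h1, h2, P.fderiv]
  simp [hPapp]

theorem gradient_antimonotone (n : ℕ) (f : (Fin n → ℝ) → ℝ)
    (hsym : ∀ σ : Equiv.Perm (Fin n), ∀ x : Fin n → ℝ, (∀ i, 0 < x i) →
      f (x ∘ σ) = f x)
    (hconc : ConcaveOn ℝ {x : Fin n → ℝ | ∀ i, 0 < x i} f)
    (hdiff : ∀ x : Fin n → ℝ, (∀ i, 0 < x i) → DifferentiableAt ℝ f x)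
    (lam : Fin n → ℝ) (hlam : ∀ i, 0 < lam i) :
    ∀ i j : Fin n, i ≠ j → lam j ≤ lam i →
      fderiv ℝ f lam (Pi.single i 1) ≤ fderiv ℝ f lam (Pi.single j 1) := by
  intro i j hij hle
  set σ : Equiv.Perm (Fin n) := Equiv.swap i j with hσ
  rcases eq_or_lt_of_le hle with heq | hlt
  · -- equality case: lam ∘ σ = lam, use the chain rule lemma
    have hfix : lam ∘ σ = lam := by
      funext k
      by_cases hki : k = i
      · simp [hσ, hki, Equiv.swap_apply_left, heq]
      · by_cases hkj : k = j
        · simp [hσ, hkj, Equiv.swap_apply_right, heq]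
        · simp [hσ, Equiv.swap_apply_of_ne_of_ne hki hkj]
    have hsingle : (Pi.single i 1 : Fin n → ℝ) ∘ σ = Pi.single j 1 := by
      funext k
      by_cases hkj : k = j
      · simp [hσ, hkj, Equiv.swap_apply_right, Pi.single_apply]
      · by_cases hki : k = i
        · simp [hσ, hki, Equiv.swap_apply_left, Pi.single_apply, hij,
            (Ne.symm hij : j ≠ i)]
        · simp [hσ, Equiv.swap_apply_of_ne_of_ne hki hkj, Pi.single_apply, hki, hkj]
    have h1 : fderiv ℝ f lam (Pi.single i 1)
        = fderiv ℝ f (lam ∘ σ) ((Pi.single i 1 : Fin n → ℝ) ∘ σ) :=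
      fderiv_perm n f hsym hdiff σ lam hlam _
    rw [hfix, hsingle] at h1
    exact le_of_eq h1
  · -- strict case: use concavity along the segment from lam to lam ∘ σ
    set y : Fin n → ℝ := lam ∘ σ with hy
    have hypos : ∀ k, 0 < y k := fun k => hlam (σ k)
    have hfy : f y = f lam := hsym σ lam hlam
    set v : Fin n → ℝ := y - lam with hv
    set g : ℝ → ℝ := fun t => f (lam + t • v) with hg
    -- g is concave on Icc 0 1
    have hmem : ∀ t ∈ Icc (0:ℝ) 1, (∀ k, 0 < (lam + t • v) k) := by
      intro t ht k
      have : lam + t • v = (1 - t) • lam + t • y := by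
        rw [hv]; ring_nf; module
      rw [this]
      have h1 : 0 ≤ 1 - t := by linarith [ht.2]
      have h2 : 0 ≤ t := ht.1
      rcases eq_or_lt_of_le h1 with h1' | h1'
      · have : t = 1 := by linarith
        simp [this, hypos k]
      · have := add_pos_of_pos_of_nonneg (mul_pos h1' (hlam k))
          (mul_nonneg h2 (hypos k).le)
        simpa [Pi.add_apply, Pi.smul_apply, smul_eq_mul] using this
    have hgconc : ConcaveOn ℝ (Icc (0:ℝ) 1) g := by
      refine ⟨convex_Icc 0 1, ?_⟩
      intro s hs t ht a b ha hb hab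
      have hs' := hmem s hs
      have ht' := hmem t ht
      have key := hconc.2 (Set.mem_setOf.mpr hs') (Set.mem_setOf.mpr ht') ha hb hab
      have harg : lam + (a * s + b * t) • v = a • (lam + s • v) + b • (lam + t • v) := by
        have : (a + b) • lam = lam := by rw [hab, one_smul]
        rw [add_smul, mul_smul, mul_smul]
        nth_rewrite 1 [← this]
        module
      simpa [hg, smul_eq_mul, harg] using key
    -- derivative of g at 0
    have hder0 : HasDerivAt g (fderiv ℝ f lam v) 0 := by
      have hinner : HasDerivAt (fun t : ℝ => lam + t • v) v 0 := by
        simpa using ((hasDerivAt_id (0:ℝ)).smul_const v).const_add lam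
      have houter : HasFDerivAt f (fderiv ℝ f lam) (lam + (0:ℝ) • v) := by
        simpa using (hdiff lam hlam).hasFDerivAt
      exact houter.comp_hasDerivAt 0 hinner
    -- slope g 0 1 = 0 since g 1 = f y = f lam = g 0
    have hg0 : g 0 = f lam := by simp [hg]
    have hg1 : g 1 = f lam := by
      have : lam + (1:ℝ) • v = y := by rw [hv]; module
      rw [hg]; simp only [this]; exact hfy
    have hslope : slope g 0 1 = 0 := by
      rw [slope_def_field, hg0, hg1]; simp
    have hkey : (0:ℝ) ≤ fderiv ℝ f lam v := by
      have := hgconc.slope_le_of_hasDerivAt (by simp : (0:ℝ) ∈ Icc (0:ℝ) 1)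
        (by simp : (1:ℝ) ∈ Icc (0:ℝ) 1) one_pos hder0
      rwa [hslope] at this
    -- v = (lam i - lam j) • (single j 1 - single i 1)
    have hvform : v = (lam i - lam j) • (Pi.single j 1 - Pi.single i 1 : Fin n → ℝ) := by
      funext k
      simp only [hv, hy, Pi.sub_apply, Function.comp_apply, Pi.smul_apply, smul_eq_mul]
      by_cases hki : k = i
      · subst hki
        simp [hσ, Equiv.swap_apply_left, Pi.single_apply, hij, (Ne.symm hij : j ≠ k)]
      · by_cases hkj : k = j
        · subst hkj
          simp [hσ, Equiv.swap_apply_right, Pi.single_apply, hki]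
        · simp [hσ, Equiv.swap_apply_of_ne_of_ne hki hkj, Pi.single_apply, hki, hkj]
    rw [hvform] at hkey
    have hmaps : fderiv ℝ f lam ((lam i - lam j) • (Pi.single j 1 - Pi.single i 1 : Fin n → ℝ))
        = (lam i - lam j) * (fderiv ℝ f lam (Pi.single j 1) - fderiv ℝ f lam (Pi.single i 1)) := by
      rw [map_smul, map_sub]; simp [smul_eq_mul]
    rw [hmaps] at hkey
    have hpos : 0 < lam i - lam j := by linarith
    nlinarith [hkey]
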